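/- Assume the Continuum Hypothesis (the cardinality of ℝ equals ℵ₁). Let n ≥ 2. Then there exists a function c : ℝⁿ → ℕ such that no rectangle is monochromatic: there is no rectangle (x₀, x₁, x₂, x₃) in ℝⁿ with c(x₀) = c(x₁) = c(x₂) = c(x₃). In other words, the hypergraph Γₙ of rectangles on ℝⁿ has countable chromatic number. -/

import Mathlib

/-- A rectangle in `ℝⁿ`: a 4-tuple of points listed in cyclic order with
`x₁ - x₀ = x₂ - x₃`, adjacent edges at `x₀` orthogonal, and nondegenerate. -/
def IsRectangle {n : ℕ} (x₀ x₁ x₂ x₃ : EuclideanSpace ℝ (Fin n)) : Prop :=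
  x₁ - x₀ = x₂ - x₃ ∧ (inner ℝ (x₁ - x₀) (x₃ - x₀) : ℝ) = 0 ∧ x₁ ≠ x₀ ∧ x₃ ≠ x₀

/-- The span over `ℚ` of a countable set is countable. -/
theorem aux_countable_span (V : Type) [AddCommGroup V] [Module ℚ V]
    (s : Set V) (hs : s.Countable) : (Submodule.span ℚ s : Set V).Countable := by
  haveI := hs.to_subtype
  have h : (Submodule.span ℚ s : Set V)
      = Set.range (Finsupp.linearCombination ℚ ((↑) : s → V)) := by
    rw [Finsupp.span_eq_range_linearCombination]; rfl
  rw [h]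
  exact Set.countable_range _

/-- Main combinatorial lemma (Erdős–Kakutani style): a `ℚ`-vector space indexed by a
well-order with countable initial segments admits a countable coloring with no
monochromatic nondegenerate parallelogram. -/
theorem aux_coloring (V I : Type) [AddCommGroup V] [Module ℚ V]
    [LinearOrder I] [WellFoundedLT I] (ι : V ≃ I)
    (hIic : ∀ i : I, (Set.Iic i).Countable) :
    ∃ c : V → ℕ, ∀ v₀ v₁ v₂ v₃ : V, v₀ = v₁ - v₂ + v₃ →
      v₀ ≠ v₁ → v₀ ≠ v₂ → v₀ ≠ v₃ → v₁ ≠ v₂ → v₁ ≠ v₃ → v₂ ≠ v₃ →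
      ¬ (c v₀ = c v₁ ∧ c v₀ = c v₂ ∧ c v₀ = c v₃) := by
  classical
  -- the increasing chain of countable submodules
  set T : I → Submodule ℚ V := fun i => Submodule.span ℚ (ι.symm '' Set.Iic i) with hTdef
  have hTmono : ∀ {i j : I}, i ≤ j → T i ≤ T j := fun h =>
    Submodule.span_mono (Set.image_mono (Set.Iic_subset_Iic.mpr h))
  have hTcount : ∀ i, (T i : Set V).Countable := fun i =>
    aux_countable_span V _ ((hIic i).image _)
  -- the level function
  have hwf : WellFounded ((· < ·) : I → I → Prop) := wellFounded_lt
  have hne : ∀ v : V, {i : I | v ∈ T i}.Nonempty := fun v =>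
    ⟨ι v, Submodule.subset_span ⟨ι v, Set.mem_Iic.mpr le_rfl, ι.symm_apply_apply v⟩⟩
  set L : V → I := fun v => hwf.min {i : I | v ∈ T i} (hne v) with hLdef
  have hLmem : ∀ v, v ∈ T (L v) := fun v => hwf.min_mem _ (hne v)
  have hLmin : ∀ v i, v ∈ T i → L v ≤ i := fun v i h =>
    not_lt.mp (hwf.not_lt_min _ h)
  -- per-level injections into ℕ
  choose f hf using fun i => Set.countable_iff_exists_injective.mp (hTcount i)
  refine ⟨fun v => f (L v) ⟨v, hLmem v⟩, ?_⟩
  intro v₀ v₁ v₂ v₃ hrel h01 h02 h03 h12 h13 h23 ⟨e1, e2, e3⟩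
  -- same color and same level forces equality
  have keyAux : ∀ (w : V) (i : I) (h : L w = i) (hw : w ∈ T i),
      f i ⟨w, hw⟩ = f (L w) ⟨w, hLmem w⟩ := by
    rintro w i rfl hw; rfl
  have key : ∀ v w : V, f (L v) ⟨v, hLmem v⟩ = f (L w) ⟨w, hLmem w⟩ → L v = L w → v = w := by
    intro v w hc hL
    have hw : w ∈ T (L v) := hL ▸ hLmem w
    have hc' : f (L v) ⟨v, hLmem v⟩ = f (L v) ⟨w, hw⟩ := by
      rw [hc, ← keyAux w (L v) hL.symm hw]
    exact congrArg Subtype.val (hf (L v) hc')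
  -- the levels are pairwise distinct
  have hL01 : L v₀ ≠ L v₁ := fun h => h01 (key _ _ e1 h)
  have hL02 : L v₀ ≠ L v₂ := fun h => h02 (key _ _ e2 h)
  have hL03 : L v₀ ≠ L v₃ := fun h => h03 (key _ _ e3 h)
  have hL12 : L v₁ ≠ L v₂ := fun h => h12 (key _ _ (e1.symm.trans e2) h)
  have hL13 : L v₁ ≠ L v₃ := fun h => h13 (key _ _ (e1.symm.trans e3) h)
  have hL23 : L v₂ ≠ L v₃ := fun h => h23 (key _ _ (e2.symm.trans e3) h)
  -- each vertex lies in the span of the other three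
  have m0 : v₀ ∈ Submodule.span ℚ ({v₁, v₂, v₃} : Set V) := by
    rw [hrel]
    exact Submodule.add_mem _
      (Submodule.sub_mem _ (Submodule.subset_span (by simp)) (Submodule.subset_span (by simp)))
      (Submodule.subset_span (by simp))
  have m1 : v₁ ∈ Submodule.span ℚ ({v₀, v₂, v₃} : Set V) := by
    have h : v₁ = v₀ + v₂ - v₃ := by rw [hrel]; abel
    rw [h]
    exact Submodule.sub_mem _
      (Submodule.add_mem _ (Submodule.subset_span (by simp)) (Submodule.subset_span (by simp)))
      (Submodule.subset_span (by simp))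
  have m2 : v₂ ∈ Submodule.span ℚ ({v₀, v₁, v₃} : Set V) := by
    have h : v₂ = v₁ - v₀ + v₃ := by rw [hrel]; abel
    rw [h]
    exact Submodule.add_mem _
      (Submodule.sub_mem _ (Submodule.subset_span (by simp)) (Submodule.subset_span (by simp)))
      (Submodule.subset_span (by simp))
  have m3 : v₃ ∈ Submodule.span ℚ ({v₀, v₁, v₂} : Set V) := by
    have h : v₃ = v₀ - v₁ + v₂ := by rw [hrel]; abel
    rw [h]
    exact Submodule.add_mem _
      (Submodule.sub_mem _ (Submodule.subset_span (by simp)) (Submodule.subset_span (by simp)))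
      (Submodule.subset_span (by simp))
  -- the step: the maximum level vertex is in the span of strictly lower levels
  have step : ∀ p q r u : V, p ∈ Submodule.span ℚ ({q, r, u} : Set V) →
      L q < L p → L r < L p → L u < L p → False := by
    intro p q r u hm hq hr hu
    set j := max (L q) (max (L r) (L u)) with hj
    have hjlt : j < L p := max_lt hq (max_lt hr hu)
    have hq' : q ∈ T j := hTmono (le_max_left _ _) (hLmem q)
    have hr' : r ∈ T j := hTmono (le_trans (le_max_left _ _) (le_max_right _ _)) (hLmem r)
    have hu' : u ∈ T j := hTmono (le_trans (le_max_right _ _) (le_max_right _ _)) (hLmem u)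
    have hsub : ({q, r, u} : Set V) ⊆ (T j : Set V) := by
      intro x hx
      simp only [Set.mem_insert_iff, Set.mem_singleton_iff] at hx
      rcases hx with rfl | rfl | rfl <;> assumption
    have hpj : p ∈ T j := Submodule.span_le.mpr hsub hm
    exact absurd (hLmin p j hpj) (not_le.mpr hjlt)
  -- identify the maximum level and conclude
  set M := max (max (L v₀) (L v₁)) (max (L v₂) (L v₃)) with hM
  have hle0 : L v₀ ≤ M := le_trans (le_max_left _ _) (le_max_left _ _)
  have hle1 : L v₁ ≤ M := le_trans (le_max_right _ _) (le_max_left _ _)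
  have hle2 : L v₂ ≤ M := le_trans (le_max_left _ _) (le_max_right _ _)
  have hle3 : L v₃ ≤ M := le_trans (le_max_right _ _) (le_max_right _ _)
  have hMcases : M = L v₀ ∨ M = L v₁ ∨ M = L v₂ ∨ M = L v₃ := by
    rcases max_choice (max (L v₀) (L v₁)) (max (L v₂) (L v₃)) with h | h <;> rw [hM, h]
    · rcases max_choice (L v₀) (L v₁) with h' | h' <;> rw [h'] <;> tauto
    · rcases max_choice (L v₂) (L v₃) with h' | h' <;> rw [h'] <;> tauto
  rcases hMcases with h | h | h | h
  · exact step v₀ v₁ v₂ v₃ m0 (lt_of_le_of_ne (h ▸ hle1) (Ne.symm (h ▸ hL01)))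
      (lt_of_le_of_ne (h ▸ hle2) (Ne.symm (h ▸ hL02)))
      (lt_of_le_of_ne (h ▸ hle3) (Ne.symm (h ▸ hL03)))
  · exact step v₁ v₀ v₂ v₃ m1 (lt_of_le_of_ne (h ▸ hle0) (h ▸ hL01))
      (lt_of_le_of_ne (h ▸ hle2) (Ne.symm (h ▸ hL12)))
      (lt_of_le_of_ne (h ▸ hle3) (Ne.symm (h ▸ hL13)))
  · exact step v₂ v₀ v₁ v₃ m2 (lt_of_le_of_ne (h ▸ hle0) (h ▸ hL02))
      (lt_of_le_of_ne (h ▸ hle1) (h ▸ hL12))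
      (lt_of_le_of_ne (h ▸ hle3) (Ne.symm (h ▸ hL23)))
  · exact step v₃ v₀ v₁ v₂ m3 (lt_of_le_of_ne (h ▸ hle0) (h ▸ hL03))
      (lt_of_le_of_ne (h ▸ hle1) (h ▸ hL13))
      (lt_of_le_of_ne (h ▸ hle2) (h ▸ hL23))

/-- Under the Continuum Hypothesis, the hypergraph `Γₙ` of rectangles on
`ℝⁿ` has countable chromatic number: there is `c : ℝⁿ → ℕ` under which no rectangle is
monochromatic. -/
theorem CH_implies_countable_chromatic_of_rectangles
    (CH : Cardinal.mk ℝ = Cardinal.aleph 1)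
    (n : ℕ) (hn : 2 ≤ n) :
    ∃ c : EuclideanSpace ℝ (Fin n) → ℕ,
      ∀ x₀ x₁ x₂ x₃ : EuclideanSpace ℝ (Fin n), IsRectangle x₀ x₁ x₂ x₃ →
        ¬ (c x₀ = c x₁ ∧ c x₀ = c x₂ ∧ c x₀ = c x₃) := by
  classical
  have hV : Cardinal.mk (EuclideanSpace ℝ (Fin n)) = Cardinal.aleph 1 := by
    have h1 : Cardinal.mk (EuclideanSpace ℝ (Fin n)) = Cardinal.mk (Fin n → ℝ) :=
      Cardinal.mk_congr (WithLp.equiv 2 _)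
    rw [h1, Cardinal.mk_arrow, Cardinal.lift_id, Cardinal.lift_id, Cardinal.mk_fin, CH]
    have h2 : (Cardinal.aleph 1) ^ (n : Cardinal) = (Cardinal.aleph 1) ^ (n : ℕ) := by
      norm_cast
    rw [h2]
    exact Cardinal.power_nat_eq (Cardinal.aleph0_le_aleph 1) (by omega)
  have hI : Cardinal.mk ((Cardinal.aleph 1).ord.ToType) = Cardinal.aleph 1 := by
    rw [Cardinal.mk_toType, Cardinal.card_ord]
  obtain ⟨ι⟩ : Nonempty (EuclideanSpace ℝ (Fin n) ≃ (Cardinal.aleph 1).ord.ToType) :=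
    Cardinal.eq.mp (hV.trans hI.symm)
  have hIic : ∀ i : (Cardinal.aleph 1).ord.ToType, (Set.Iic i).Countable := by
    intro i
    rw [← Set.Iio_insert]
    refine Set.Countable.insert _ ?_
    rw [Cardinal.countable_iff_lt_aleph_one]
    exact Cardinal.mk_Iio_ord_toType i
  obtain ⟨c, hc⟩ := aux_coloring (EuclideanSpace ℝ (Fin n)) _ ι hIic
  refine ⟨c, ?_⟩
  rintro x₀ x₁ x₂ x₃ ⟨hpar, hinner, h10, h30⟩
  -- pairwise distinctness of the vertices
  have h13 : x₁ ≠ x₃ := by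
    intro h
    rw [← h] at hinner
    exact h10 (sub_eq_zero.mp (inner_self_eq_zero.mp hinner))
  have h20 : x₂ ≠ x₀ := by
    intro h
    rw [h] at hpar
    have h3 : x₃ - x₀ = -(x₁ - x₀) := by rw [hpar]; abel
    rw [h3, inner_neg_right, neg_eq_zero] at hinner
    exact h10 (sub_eq_zero.mp (inner_self_eq_zero.mp hinner))
  have h21 : x₂ ≠ x₁ := by
    intro h
    rw [h] at hpar
    exact h30 (add_left_cancel (sub_eq_sub_iff_add_eq_add.mp hpar))
  have h23 : x₂ ≠ x₃ := by
    intro h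
    rw [h, sub_self] at hpar
    exact h10 (sub_eq_zero.mp hpar)
  have hrel : x₀ = x₁ - x₂ + x₃ := by
    have h : x₁ - (x₂ - x₃) = x₀ := by rw [← hpar]; abel
    rw [← h]; abel
  exact hc x₀ x₁ x₂ x₃ hrel (Ne.symm h10) (Ne.symm h20) (Ne.symm h30) (Ne.symm h21) h13 h23
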